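/- arXiv:1602.02234 — 3 statements merged into one kernel-verified Lean document; each statement's English description precedes it below -/
import Mathlib

section
/- (Auslander–Bridger Lemma) Let 𝒜 be an abelian category with enough projectives and 𝒳 a resolving subcategory of 𝒜. Given two exact sequences 0 → X_n → X_{n-1} → ⋯ → X_0 → Z → 0 and 0 → Y_n → Y_{n-1} → ⋯ → Y_0 → Z → 0 with X_i ∈ 𝒳 and Y_i ∈ 𝒳 for 0 ≤ i ≤ n−1, then X_n ∈ 𝒳 if and only if Y_n ∈ 𝒳. -/
open CategoryTheory CategoryTheory.Limits
open scoped ZeroObject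

/-- A full subcategory (given by a predicate on objects, closed under isomorphisms)
of an abelian category with enough projectives is *resolving* if it contains all projective
objects, and is closed under extensions, direct summands and kernels of epimorphisms. -/
def IsResolving {C : Type*} [Category C] [Abelian C] (P : C → Prop) : Prop :=
  (∀ X Y : C, (X ≅ Y) → P X → P Y) ∧
  (∀ X : C, Projective X → P X) ∧
  (∀ S : ShortComplex C, S.ShortExact → P S.X₁ → P S.X₃ → P S.X₂) ∧
  (∀ X Y : C, P (X ⊞ Y) → P X) ∧
  (∀ S : ShortComplex C, S.ShortExact → P S.X₂ → P S.X₃ → P S.X₁)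

namespace ABtest

variable {𝒜 : Type*} [Category 𝒜] [Abelian 𝒜]

/-- `Res P n K Z` : there is an exact sequence `0 → K → M_{n-1} → ⋯ → M_0 → Z → 0`
with all `M_i` satisfying `P`. -/
def Res (P : 𝒜 → Prop) : ℕ → 𝒜 → 𝒜 → Prop
  | 0, K, Z => Nonempty (K ≅ Z)
  | n+1, K, Z => ∃ (M : 𝒜) (f : M ⟶ Z), P M ∧ Epi f ∧ Res P n K (kernel f)

lemma res_isoK {P : 𝒜 → Prop} (n : ℕ) {K K' Z : 𝒜} (h : Res P n K Z) (e : K ≅ K') :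
    Res P n K' Z := by
  induction n generalizing Z with
  | zero => exact ⟨e.symm ≪≫ h.some⟩
  | succ n ih =>
    obtain ⟨M, f, hM, hf, h⟩ := h
    exact ⟨M, f, hM, hf, ih h⟩

lemma res_isoZ {P : 𝒜 → Prop} (n : ℕ) {K Z Z' : 𝒜} (h : Res P n K Z) (e : Z ≅ Z') :
    Res P n K Z' := by
  induction n generalizing Z Z' with
  | zero => exact ⟨h.some ≪≫ e⟩
  | succ n ih =>
    obtain ⟨M, f, hM, hf, h⟩ := h
    refine ⟨M, f ≫ e.hom, hM, epi_comp _ _, ih h (kernelCompMono f e.hom).symm⟩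

lemma kernel_shortExact {M Z : 𝒜} (f : M ⟶ Z) [Epi f] :
    (ShortComplex.mk (kernel.ι f) f (kernel.condition f)).ShortExact where
  exact := ShortComplex.exact_of_f_is_kernel _ (kernelIsKernel f)


lemma exists_proj_res [EnoughProjectives 𝒜] (n : ℕ) (Z : 𝒜) :
    ∃ Ω, Res (fun X : 𝒜 => Projective X) n Ω Z := by
  induction n generalizing Z with
  | zero => exact ⟨Z, ⟨Iso.refl _⟩⟩
  | succ n ih =>
    obtain ⟨Ω, h⟩ := ih (kernel (Projective.π Z))
    exact ⟨Ω, Projective.over Z, Projective.π Z, inferInstance, inferInstance, h⟩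



/-- For a short exact `S`, `X₁` is isomorphic to `kernel S.g`. -/
noncomputable def seKerIso {S : ShortComplex 𝒜} (hS : S.ShortExact) : S.X₁ ≅ kernel S.g :=
  haveI := hS.mono_f
  haveI : Epi (kernel.lift S.g S.f S.zero) :=
    (ShortComplex.exact_iff_epi_kernel_lift _).1 hS.exact
  haveI : Mono (kernel.lift S.g S.f S.zero) := mono_of_mono_fac (kernel.lift_ι S.g S.f S.zero)
  haveI := isIso_of_mono_of_epi (kernel.lift S.g S.f S.zero)
  asIso (kernel.lift S.g S.f S.zero)

lemma seKerIso_hom_ι {S : ShortComplex 𝒜} (hS : S.ShortExact) :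
    (seKerIso hS).hom ≫ kernel.ι S.g = S.f := kernel.lift_ι _ _ _

/-- cons lemma -/
lemma res_cons' {P : 𝒜 → Prop} (n : ℕ) {K M C Z : 𝒜} {i : K ⟶ M} {p : M ⟶ C} {w : i ≫ p = 0}
    (hSE : (ShortComplex.mk i p w).ShortExact) (hM : P M) (h : Res P n C Z) :
    Res P (n+1) K Z := by
  induction n generalizing Z with
  | zero =>
    have := hSE.epi_g
    refine ⟨M, p ≫ h.some.hom, hM, epi_comp _ _, ⟨?_⟩⟩
    exact (seKerIso hSE) ≪≫ (kernelCompMono p h.some.hom).symm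
  | succ n ih =>
    obtain ⟨M', f, hM', hf, h⟩ := h
    exact ⟨M', f, hM', hf, ih h⟩


/-- Schanuel-style lemma: given an epi `f : M ⟶ Z` and an epi `q : Q ⟶ Z` with `Q`
projective, there is a short exact sequence `0 → ker q → ker f ⊞ Q → M → 0`. -/
lemma syz {M Z Q : 𝒜} (f : M ⟶ Z) (q : Q ⟶ Z) [Epi f] [Epi q] (hQ : Projective Q) :
    ∃ (ψ : (kernel q : 𝒜) ⟶ kernel f ⊞ Q) (φ : kernel f ⊞ Q ⟶ M) (w : ψ ≫ φ = 0),
      (ShortComplex.mk ψ φ w).ShortExact := by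
  haveI := hQ
  set l : Q ⟶ M := Projective.factorThru q f with hldef
  have hl : l ≫ f = q := Projective.factorThru_comp _ _
  set φ : kernel f ⊞ Q ⟶ M := biprod.desc (kernel.ι f) l with hφdef
  have hφepi : Epi φ := by
    refine Preadditive.epi_of_cancel_zero _ (fun {T} c hc => ?_)
    have h1 : kernel.ι f ≫ c = 0 := by
      have := biprod.inl ≫= hc
      simpa [hφdef] using this
    have h2 : l ≫ c = 0 := by
      have := biprod.inr ≫= hc
      simpa [hφdef] using this
    have h3 : f ≫ Abelian.epiDesc f c h1 = c := Abelian.comp_epiDesc f c h1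
    have h4 : q ≫ Abelian.epiDesc f c h1 = 0 := by
      rw [← hl, Category.assoc, h3, h2]
    have h5 : Abelian.epiDesc f c h1 = 0 := by
      rw [← cancel_epi q, comp_zero]; exact h4
    rw [← h3, h5, comp_zero]
  have w1 : (kernel.ι q ≫ l) ≫ f = 0 := by rw [Category.assoc, hl, kernel.condition]
  set α : (kernel q : 𝒜) ⟶ kernel f := kernel.lift f (kernel.ι q ≫ l) w1 with hαdef
  have hα : α ≫ kernel.ι f = kernel.ι q ≫ l := kernel.lift_ι _ _ _
  set ψ : (kernel q : 𝒜) ⟶ kernel f ⊞ Q := biprod.lift (-α) (kernel.ι q) with hψdef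
  have w : ψ ≫ φ = 0 := by
    rw [hψdef, hφdef, biprod.lift_desc, Preadditive.neg_comp, hα, neg_add_cancel]
  have hψsnd : ψ ≫ biprod.snd = kernel.ι q := biprod.lift_snd _ _
  have hψmono : Mono ψ := mono_of_mono_fac hψsnd
  have hφf : φ ≫ f = biprod.snd ≫ q := by
    ext
    · simp [hφdef]
    · simp [hφdef, hl]
  have hzero : ∀ {T : 𝒜} (t : T ⟶ kernel f ⊞ Q), t ≫ φ = 0 → (t ≫ biprod.snd) ≫ q = 0 := by
    intro T t ht
    rw [Category.assoc, ← hφf, ← Category.assoc, ht, zero_comp]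
  have hfac : ∀ {T : 𝒜} (t : T ⟶ kernel f ⊞ Q) (ht : t ≫ φ = 0),
      kernel.lift q (t ≫ biprod.snd) (hzero t ht) ≫ ψ = t := by
    intro T t ht
    have h6 : t ≫ biprod.fst ≫ kernel.ι f + t ≫ biprod.snd ≫ l = 0 := by
      have h := ht
      rw [hφdef, ← Category.id_comp (biprod.desc (kernel.ι f) l), ← biprod.total,
        Preadditive.add_comp, Category.assoc, Category.assoc,
        biprod.inl_desc, biprod.inr_desc, Preadditive.comp_add] at h
      exact h
    have h7 : t ≫ biprod.fst ≫ kernel.ι f = -(t ≫ biprod.snd ≫ l) :=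
      eq_neg_of_add_eq_zero_left h6
    apply biprod.hom_ext
    · rw [← cancel_mono (kernel.ι f)]
      simp only [Category.assoc, hψdef, biprod.lift_fst, Preadditive.neg_comp,
        Preadditive.comp_neg, hα, h7]
      rw [← Category.assoc, kernel.lift_ι, Category.assoc]
    · rw [Category.assoc, hψsnd, kernel.lift_ι]
  refine ⟨ψ, φ, w, ⟨ShortComplex.exact_of_f_is_kernel _ ?_⟩⟩
  refine KernelFork.IsLimit.ofι ψ w
    (fun {T} t ht => kernel.lift q (t ≫ biprod.snd) (hzero t ht))
    (fun {T} t ht => hfac t ht) (fun {T} t ht m hm => ?_)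
  show m = kernel.lift q (t ≫ biprod.snd) (hzero t ht)
  rw [← cancel_mono (kernel.ι q), kernel.lift_ι, ← hψsnd, ← Category.assoc, hm]


section Pseudo
open CategoryTheory.Abelian.Pseudoelement
attribute [local instance] CategoryTheory.Abelian.Pseudoelement.objectToSort
  CategoryTheory.Abelian.Pseudoelement.homToFun

/-- Restriction of a short exact sequence along an epimorphism onto the middle object:
if `0 → A → B → X → 0` is exact and `g : M ↠ B`, then `0 → ker g → ker (g ≫ p) → A → 0`
is exact. -/
lemma restrict {S : ShortComplex 𝒜} (hS : S.ShortExact) {M : 𝒜} (g : M ⟶ S.X₂) [Epi g] :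
    ∃ (μ : (kernel g : 𝒜) ⟶ kernel (g ≫ S.g)) (e' : (kernel (g ≫ S.g) : 𝒜) ⟶ S.X₁)
      (w : μ ≫ e' = 0), (ShortComplex.mk μ e' w).ShortExact := by
  haveI := hS.mono_f
  haveI := hS.epi_g
  haveI : Epi (g ≫ S.g) := epi_comp _ _
  have w0 : (kernel.ι (g ≫ S.g) ≫ g) ≫ S.g = 0 := by
    rw [Category.assoc, kernel.condition]
  obtain ⟨e', he'⟩ := KernelFork.IsLimit.lift' hS.fIsKernel (kernel.ι (g ≫ S.g) ≫ g) w0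
  rw [Fork.ι_ofι] at he'
  -- he' : e' ≫ S.f = kernel.ι (g ≫ S.g) ≫ g
  have wμ : kernel.ι g ≫ g ≫ S.g = 0 := by rw [← Category.assoc, kernel.condition, zero_comp]
  set μ : (kernel g : 𝒜) ⟶ kernel (g ≫ S.g) := kernel.lift (g ≫ S.g) (kernel.ι g) wμ with hμdef
  have hμι : μ ≫ kernel.ι (g ≫ S.g) = kernel.ι g := kernel.lift_ι _ _ _
  have hμmono : Mono μ := mono_of_mono_fac hμι
  have w : μ ≫ e' = 0 := by
    rw [← cancel_mono S.f, Category.assoc, he', zero_comp, ← Category.assoc, hμι,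
      kernel.condition]
  have hepi : Epi e' := by
    apply epi_of_pseudo_surjective
    intro a
    obtain ⟨m, hm⟩ := pseudo_surjective_of_epi g (S.f a)
    have hker : (g ≫ S.g) m = 0 := by
      rw [CategoryTheory.Abelian.Pseudoelement.comp_apply, hm, ← CategoryTheory.Abelian.Pseudoelement.comp_apply, S.zero, CategoryTheory.Abelian.Pseudoelement.zero_apply]
    obtain ⟨k, hk⟩ := pseudo_exact_of_exact (kernel_shortExact (g ≫ S.g)).exact m hker
    refine ⟨k, pseudo_injective_of_mono S.f ?_⟩
    rw [← CategoryTheory.Abelian.Pseudoelement.comp_apply, he', CategoryTheory.Abelian.Pseudoelement.comp_apply, hk, hm]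
  refine ⟨μ, e', w, ⟨?_⟩⟩
  apply exact_of_pseudo_exact
  intro b hb
  have hgb : g (kernel.ι (g ≫ S.g) b) = 0 := by
    rw [← CategoryTheory.Abelian.Pseudoelement.comp_apply, ← he', CategoryTheory.Abelian.Pseudoelement.comp_apply]
    show S.f (e' b) = 0
    rw [hb, apply_zero]
  obtain ⟨a, ha⟩ := pseudo_exact_of_exact (kernel_shortExact g).exact _ hgb
  refine ⟨a, pseudo_injective_of_mono (kernel.ι (g ≫ S.g)) ?_⟩
  rw [← CategoryTheory.Abelian.Pseudoelement.comp_apply]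
  show (μ ≫ kernel.ι (g ≫ S.g)) a = _
  rw [hμι, ha]

end Pseudo



variable {𝒳 : 𝒜 → Prop}

lemma mem_biprod (h𝒳 : IsResolving 𝒳) {X Q : 𝒜} (hX : 𝒳 X) (hQ : 𝒳 Q) : 𝒳 (X ⊞ Q) :=
  h𝒳.2.2.1 _ (ShortComplex.Splitting.ofHasBinaryBiproduct X Q).shortExact hX hQ

lemma mem_ker (h𝒳 : IsResolving 𝒳) {M Z : 𝒜} (f : M ⟶ Z) [Epi f] (hM : 𝒳 M) (hZ : 𝒳 Z) :
    𝒳 (kernel f) :=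
  h𝒳.2.2.2.2 _ (kernel_shortExact f) hM hZ

noncomputable def kernelBiprodMapIso {M Z : 𝒜} (f : M ⟶ Z) (Q : 𝒜) :
    (kernel f : 𝒜) ≅ kernel (biprod.map f (𝟙 Q)) where
  hom := kernel.lift _ (kernel.ι f ≫ biprod.inl) (by
    rw [Category.assoc, biprod.inl_map, ← Category.assoc, kernel.condition, zero_comp])
  inv := kernel.lift _ (kernel.ι _ ≫ biprod.fst) (by
    have := kernel.condition (biprod.map f (𝟙 Q)) =≫ biprod.fst
    rw [Category.assoc, biprod.map_fst, zero_comp, ← Category.assoc] at this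
    exact this)
  hom_inv_id := by
    rw [← cancel_mono (kernel.ι f)]
    simp
  inv_hom_id := by
    have hsnd : kernel.ι (biprod.map f (𝟙 Q)) ≫ biprod.snd = 0 := by
      have := kernel.condition (biprod.map f (𝟙 Q)) =≫ biprod.snd
      rw [Category.assoc, biprod.map_snd, zero_comp, ← Category.assoc, Category.comp_id] at this
      exact this
    rw [← cancel_mono (kernel.ι (biprod.map f (𝟙 Q)))]
    apply biprod.hom_ext
    · simp
    · simp [hsnd]

instance epi_biprod_map {M Z Q R : 𝒜} (f : M ⟶ Z) (g : Q ⟶ R) [Epi f] [Epi g] :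
    Epi (biprod.map f g) := by
  refine Preadditive.epi_of_cancel_zero _ (fun {T} c hc => ?_)
  have h1 := biprod.inl ≫= hc
  have h2 := biprod.inr ≫= hc
  rw [← Category.assoc, biprod.inl_map, Category.assoc, comp_zero] at h1
  rw [← Category.assoc, biprod.inr_map, Category.assoc, comp_zero] at h2
  have h1' : biprod.inl ≫ c = 0 := zero_of_epi_comp f h1
  have h2' : biprod.inr ≫ c = 0 := zero_of_epi_comp g h2
  apply biprod.hom_ext' <;> simpa [h1', h2']

lemma res_sum (h𝒳 : IsResolving 𝒳) {n : ℕ} {K Z : 𝒜} (Q : 𝒜) (hQ : 𝒳 Q)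
    (h : Res 𝒳 (n+1) K Z) : Res 𝒳 (n+1) K (Z ⊞ Q) := by
  obtain ⟨M, f, hM, hf, h⟩ := h
  haveI := hf
  exact ⟨M ⊞ Q, biprod.map f (𝟙 Q), mem_biprod h𝒳 hM hQ, inferInstance,
    res_isoZ _ h (kernelBiprodMapIso f Q)⟩

lemma master (h𝒳 : IsResolving 𝒳) : ∀ (n : ℕ) (S : ShortComplex 𝒜) (_ : S.ShortExact)
    (_ : 𝒳 S.X₃) (K Ω : 𝒜) (_ : Res 𝒳 n K S.X₂)
    (_ : Res (fun X : 𝒜 => Projective X) n Ω S.X₁), (𝒳 K ↔ 𝒳 Ω) := by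
  intro n
  induction n with
  | zero =>
    intro S hSE hX3 K Ω hK hΩ
    have h2 : 𝒳 S.X₂ ↔ 𝒳 S.X₁ :=
      ⟨fun h => h𝒳.2.2.2.2 _ hSE h hX3, fun h => h𝒳.2.2.1 _ hSE h hX3⟩
    exact ⟨fun h => h𝒳.1 _ _ hΩ.some.symm (h2.1 (h𝒳.1 _ _ hK.some h)),
           fun h => h𝒳.1 _ _ hK.some.symm (h2.2 (h𝒳.1 _ _ hΩ.some h))⟩
  | succ n ih =>
    intro S hSE hX3 K Ω hK hΩ
    obtain ⟨X0, g, hX0, hg, hK'⟩ := hK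
    obtain ⟨Q0, q, hQ0, hq, hΩ'⟩ := hΩ
    haveI := hg; haveI := hq; haveI := hSE.epi_g
    haveI : Epi (g ≫ S.g) := epi_comp _ _
    obtain ⟨μ, e', wμ, hSE2⟩ := restrict hSE g
    haveI := hSE2.epi_g
    obtain ⟨ψ, φ, wψ, hSE3⟩ := syz e' q hQ0
    have ik : (kernel g : 𝒜) ≅ kernel e' := seKerIso hSE2
    have hK'' : 𝒳 (kernel (g ≫ S.g)) := mem_ker h𝒳 (g ≫ S.g) hX0 hX3
    have hQ0' : 𝒳 Q0 := h𝒳.2.1 _ hQ0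
    cases n with
    | zero =>
      constructor
      · intro h
        have h1 : 𝒳 (kernel e') := h𝒳.1 _ _ (hK'.some ≪≫ ik) h
        have h2 : 𝒳 (kernel e' ⊞ Q0) := mem_biprod h𝒳 h1 hQ0'
        have h3 : 𝒳 (kernel q) := h𝒳.2.2.2.2 _ hSE3 h2 hK''
        exact h𝒳.1 _ _ hΩ'.some.symm h3
      · intro h
        have h3 : 𝒳 (kernel q) := h𝒳.1 _ _ hΩ'.some h
        have h2 : 𝒳 (kernel e' ⊞ Q0) := h𝒳.2.2.1 _ hSE3 h3 hK''
        have h1 : 𝒳 (kernel e') := h𝒳.2.2.2.1 _ _ h2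
        exact h𝒳.1 _ _ (hK'.some ≪≫ ik).symm h1
    | succ m =>
      have h1 : Res 𝒳 (m+1) K (kernel e') := res_isoZ _ hK' ik
      have h2 : Res 𝒳 (m+1) K (kernel e' ⊞ Q0) := res_sum h𝒳 Q0 hQ0' h1
      exact ih (ShortComplex.mk ψ φ wψ) hSE3 hK'' K Ω h2 hΩ'


lemma kerLift_shortExact {X Y Z : 𝒜} (d : X ⟶ Y) (d' : Y ⟶ Z) (w : d ≫ d' = 0)
    (hepi : Epi (kernel.lift d' d w)) :
    (ShortComplex.mk (kernel.ι d) (kernel.lift d' d w) (by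
      rw [← cancel_mono (kernel.ι d'), Category.assoc, kernel.lift_ι, zero_comp,
        kernel.condition])).ShortExact := by
  haveI := hepi
  refine ⟨ShortComplex.exact_of_f_is_kernel _ ?_⟩
  have hzero : ∀ {T : 𝒜} (t : T ⟶ X), t ≫ kernel.lift d' d w = 0 → t ≫ d = 0 := by
    intro T t ht
    have := ht =≫ kernel.ι d'
    rwa [Category.assoc, kernel.lift_ι, zero_comp] at this
  refine KernelFork.IsLimit.ofι _ _
    (fun {T} t ht => kernel.lift d t (hzero t ht)) (fun {T} t ht => kernel.lift_ι _ _ _)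
    (fun {T} t ht m hm => ?_)
  show m = kernel.lift d t (hzero t ht)
  rw [← cancel_mono (kernel.ι d), kernel.lift_ι]
  exact hm

/-- Extracting a `Res` datum from an exact sequence of composable arrows with
zero objects at both ends. -/
lemma extract (h𝒳 : IsResolving 𝒳) (n : ℕ) (S : ComposableArrows 𝒜 (n + 3)) (hS : S.Exact)
    (h0 : IsZero (S.obj ⟨0, Nat.lt_succ_of_le (by omega)⟩)) (hlast : IsZero (S.obj ⟨n + 3, Nat.lt_succ_of_le (by omega)⟩))
    (hX : ∀ (j : ℕ) (_ : 2 ≤ j) (_ : j ≤ n + 1), 𝒳 (S.obj ⟨j, Nat.lt_succ_of_le (by omega)⟩)) :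
    Res 𝒳 n (S.obj ⟨1, Nat.lt_succ_of_le (by omega)⟩) (S.obj ⟨n + 2, Nat.lt_succ_of_le (by omega)⟩) := by
  cases n with
  | zero =>
    have p1 : (1:ℕ) ≤ 2 := by omega
    have p2 : (2:ℕ) ≤ 0 + 3 := by omega
    haveI : Mono (S.map' 1 2 p1 p2) :=
      (hS.exact' 0 1 2).mono_g (h0.eq_of_src _ _)
    haveI : Epi (S.map' 1 2 p1 p2) :=
      (hS.exact' 1 2 3).epi_f (hlast.eq_of_tgt _ _)
    haveI : IsIso (S.map' 1 2 p1 p2) := isIso_of_mono_of_epi _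
    exact ⟨asIso (S.map' 1 2 p1 p2)⟩
  | succ m =>
    have claim : ∀ (i j : ℕ) (_ : i + j = m + 3) (h2j : 2 ≤ j) (hjm : j ≤ m + 2)
        (pj : j ≤ j + 1) (pj' : j + 1 ≤ m + 1 + 3),
        Res 𝒳 i (kernel (S.map' j (j+1) pj pj')) (S.obj ⟨m + 3, by omega⟩) := by
      intro i
      induction i with
      | zero => intro j h1 h2 h3 pj pj'; omega
      | succ i ih =>
        intro j h1 h2 h3 pj pj'
        by_cases hj : j = m + 2
        · subst hj
          obtain rfl : i = 0 := by omega
          haveI : Epi (S.map' (m+2) (m+3) pj pj') :=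
            (hS.exact' (m+2) (m+3) (m+4)).epi_f (hlast.eq_of_tgt _ _)
          have pm : m + 2 < m + 1 + 3 + 1 := by omega
          exact ⟨S.obj ⟨m + 2, pm⟩, S.map' (m+2) (m+3) pj pj',
            hX (m+2) (by omega) (by omega), inferInstance, ⟨Iso.refl _⟩⟩
        · have q1 : j + 1 ≤ j + 2 := by omega
          have q2 : j + 2 ≤ m + 1 + 3 := by omega
          have prev := ih (j+1) (by omega) (by omega) (by omega) q1 q2
          have w : S.map' j (j+1) pj pj' ≫ S.map' (j+1) (j+2) q1 q2 = 0 :=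
            hS.toIsComplex.zero' j (j+1) (j+2)
          have hepi : Epi (kernel.lift (S.map' (j+1) (j+2) q1 q2) (S.map' j (j+1) pj pj') w) :=
            (ShortComplex.exact_iff_epi_kernel_lift _).1 (hS.exact' j (j+1) (j+2))
          exact res_cons' i (kerLift_shortExact _ _ w hepi) (hX j h2 (by omega)) prev
    have r1 : (2:ℕ) ≤ 2 + 1 := by omega
    have r2 : (2:ℕ) + 1 ≤ m + 1 + 3 := by omega
    have main := claim (m+1) 2 (by omega) (by omega) (by omega) r1 r2
    have s1 : (1:ℕ) ≤ 2 := by omega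
    have s2 : (2:ℕ) ≤ m + 1 + 3 := by omega
    have w : S.map' 1 2 s1 s2 ≫ S.map' 2 3 r1 r2 = 0 :=
      hS.toIsComplex.zero' 1 2 3
    haveI hepi : Epi (kernel.lift (S.map' 2 3 r1 r2) (S.map' 1 2 s1 s2) w) :=
      (ShortComplex.exact_iff_epi_kernel_lift _).1 (hS.exact' 1 2 3)
    haveI : Mono (S.map' 1 2 s1 s2) := (hS.exact' 0 1 2).mono_g (h0.eq_of_src _ _)
    haveI : Mono (kernel.lift (S.map' 2 3 r1 r2) (S.map' 1 2 s1 s2) w) :=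
      mono_of_mono_fac (kernel.lift_ι _ _ _)
    haveI : IsIso (kernel.lift (S.map' 2 3 r1 r2) (S.map' 1 2 s1 s2) w) :=
      isIso_of_mono_of_epi _
    exact res_isoK _ main (asIso (kernel.lift (S.map' 2 3 r1 r2) (S.map' 1 2 s1 s2) w)).symm
lemma res_iff [EnoughProjectives 𝒜] (h𝒳 : IsResolving 𝒳) (n : ℕ) {K L Z Z' : 𝒜}
    (e : Z ≅ Z') (hK : Res 𝒳 n K Z) (hL : Res 𝒳 n L Z') : 𝒳 K ↔ 𝒳 L := by
  obtain ⟨Ω, hΩ⟩ := exists_proj_res n Z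
  have hzero : IsZero (0 : 𝒜) := isZero_zero 𝒜
  have wtriv : 𝟙 Z ≫ (0 : Z ⟶ (0 : 𝒜)) = 0 := by simp
  haveI hepi : Epi (0 : Z ⟶ (0:𝒜)) := ⟨fun g h _ => hzero.eq_of_src g h⟩
  have hSE : (ShortComplex.mk (𝟙 Z) (0 : Z ⟶ (0:𝒜)) wtriv).ShortExact :=
    { exact := (ShortComplex.exact_iff_epi _ rfl).2 inferInstance,
      epi_g := hepi }
  have h𝒳0 : 𝒳 (0 : 𝒜) := h𝒳.2.1 _ inferInstance
  have iff1 : 𝒳 K ↔ 𝒳 Ω := master h𝒳 n _ hSE h𝒳0 K Ω hK hΩ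
  have iff2 : 𝒳 L ↔ 𝒳 Ω := master h𝒳 n _ hSE h𝒳0 L Ω (res_isoZ n hL e.symm) hΩ
  exact iff1.trans iff2.symm

end ABtest

/-- Auslander–Bridger Lemma: Let `𝒜` be an abelian category with enough
projectives and `𝒳` a resolving subcategory.  Given two exact sequences
`0 → X_n → X_{n-1} → ⋯ → X_0 → Z → 0` and `0 → Y_n → Y_{n-1} → ⋯ → Y_0 → Z → 0`
(encoded as exact sequences `S`, `T` of composable arrows with zero objects at the two ends,
where `X_i = S.obj ⟨n+1-i⟩`, `Z = S.obj ⟨n+2⟩`) with `X_i ∈ 𝒳` and `Y_i ∈ 𝒳` for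
`0 ≤ i ≤ n-1`, we have `X_n ∈ 𝒳` if and only if `Y_n ∈ 𝒳`. -/
theorem stmt_1 {𝒜 : Type*} [Category 𝒜] [Abelian 𝒜] [EnoughProjectives 𝒜]
    (𝒳 : 𝒜 → Prop) (h𝒳 : IsResolving 𝒳) (n : ℕ)
    (S T : ComposableArrows 𝒜 (n + 3))
    (hS : S.Exact) (hT : T.Exact)
    (hS0 : IsZero (S.obj ⟨0, by omega⟩)) (hSlast : IsZero (S.obj ⟨n + 3, by omega⟩))
    (hT0 : IsZero (T.obj ⟨0, by omega⟩)) (hTlast : IsZero (T.obj ⟨n + 3, by omega⟩))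
    (e : S.obj ⟨n + 2, by omega⟩ ≅ T.obj ⟨n + 2, by omega⟩)
    (hSX : ∀ (j : ℕ) (_ : 2 ≤ j) (_ : j ≤ n + 1), 𝒳 (S.obj ⟨j, by omega⟩))
    (hTX : ∀ (j : ℕ) (_ : 2 ≤ j) (_ : j ≤ n + 1), 𝒳 (T.obj ⟨j, by omega⟩)) :
    𝒳 (S.obj ⟨1, by omega⟩) ↔ 𝒳 (T.obj ⟨1, by omega⟩) :=
  ABtest.res_iff h𝒳 n e (ABtest.extract h𝒳 n S hS hS0 hSlast hSX)
    (ABtest.extract h𝒳 n T hT hT0 hTlast hTX)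
end

section
/- Let 𝒞 be a full additive subcategory of an abelian category 𝒜. For * ∈ {b, −, blank}, the full subcategory K^*_{𝒞ac}(𝒜) of the homotopy category K^*(𝒜) consisting of 𝒞-acyclic complexes equals the left orthogonal ^⊥𝒞 = {X• ∈ K^*(𝒜) : Hom_{K^*(𝒜)}(C, X•[n]) = 0 for all n ∈ ℤ and all C ∈ 𝒞}; in particular it is a thick triangulated subcategory of K^*(𝒜). -/
open CategoryTheory CategoryTheory.Limits CategoryTheory.Pretriangulated

universe v u

variable {𝒜 : Type u} [Category.{v} 𝒜] [Abelian 𝒜]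

/-- A cochain complex `X•` over `𝒜` is `𝒞`-acyclic if the complex of abelian groups
`Hom_𝒜(C, X•)` is acyclic for every object `C ∈ 𝒞`. -/
def CAcyclic (𝒞 : 𝒜 → Prop) (X : CochainComplex 𝒜 ℤ) : Prop :=
  ∀ (C : 𝒜), 𝒞 C → ∀ n : ℤ,
    (((preadditiveCoyoneda.obj (Opposite.op C)).mapHomologicalComplex
      (ComplexShape.up ℤ)).obj X).ExactAt n


/-- elementwise exactness predicate -/
def Pred (C : 𝒜) (Y : CochainComplex 𝒜 ℤ) (i j k : ℤ) : Prop :=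
  ∀ f : C ⟶ Y.X j, f ≫ Y.d j k = 0 → ∃ h : C ⟶ Y.X i, h ≫ Y.d i j = f

lemma exactAt_iff_pred (C : 𝒜) (Y : CochainComplex 𝒜 ℤ) (i j k : ℤ)
    (hij : i + 1 = j) (hjk : j + 1 = k) :
    (((preadditiveCoyoneda.obj (Opposite.op C)).mapHomologicalComplex
      (ComplexShape.up ℤ)).obj Y).ExactAt j ↔ Pred C Y i j k := by
  rw [HomologicalComplex.exactAt_iff' _ i j k (by simp; omega) (by simpa using hjk)]
  rw [ShortComplex.ab_exact_iff]
  constructor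
  · intro H f hf
    exact H f hf
  · intro H f hf
    exact H f hf

lemma pred_shift_iff (C : 𝒜) (Y : CochainComplex 𝒜 ℤ) (n : ℤ) :
    Pred C (Y⟦n⟧) (-1) 0 1 ↔ Pred C Y (n-1) n (n+1) := by
  constructor
  · intro H f hf
    obtain ⟨h, hh⟩ := H (f ≫ (Y.XIsoOfEq (show n = 0 + n by omega)).hom) (by
      change (f ≫ (Y.XIsoOfEq (show n = 0 + n by omega)).hom) ≫ (n.negOnePow • Y.d (0 + n) (1 + n)) = 0
      simp only [CochainComplex.shiftFunctor_obj_d', Linear.comp_units_smul, Category.assoc]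
      rw [HomologicalComplex.XIsoOfEq_hom_comp_d,
        ← Y.d_comp_XIsoOfEq_hom (show n + 1 = 1 + n by omega), reassoc_of% hf]
      simp)
    change C ⟶ Y.X (-1 + n) at h
    change h ≫ (n.negOnePow • Y.d (-1 + n) (0 + n)) = f ≫ (Y.XIsoOfEq (show n = 0 + n by omega)).hom at hh
    refine ⟨n.negOnePow • (h ≫ (Y.XIsoOfEq (show (-1 : ℤ) + n = n - 1 by omega)).hom), ?_⟩
    rw [← cancel_mono (Y.XIsoOfEq (show n = 0 + n by omega)).hom, ← hh]
    simp only [CochainComplex.shiftFunctor_obj_d', Preadditive.zsmul_comp,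
      Linear.units_smul_comp, Linear.comp_units_smul, Category.assoc,
      HomologicalComplex.XIsoOfEq_hom_comp_d, HomologicalComplex.d_comp_XIsoOfEq_hom]
  · intro H f hf
    change C ⟶ Y.X (0 + n) at f
    change f ≫ (n.negOnePow • Y.d (0 + n) (1 + n)) = 0 at hf
    have hf' : f ≫ Y.d (0 + n) (n + 1) = 0 := by
      have h2 := congrArg (fun g => n.negOnePow • g) hf
      simp only [CochainComplex.shiftFunctor_obj_d', Linear.comp_units_smul, smul_smul,
        Int.units_mul_self, one_smul, smul_zero] at h2
      rw [← Y.d_comp_XIsoOfEq_hom (show 1 + n = n + 1 by omega), reassoc_of% h2, zero_comp]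
    obtain ⟨h, hh⟩ := H (f ≫ (Y.XIsoOfEq (show (0 : ℤ) + n = n by omega)).hom) (by
      rw [Category.assoc, HomologicalComplex.XIsoOfEq_hom_comp_d]
      exact hf')
    refine ⟨n.negOnePow • (h ≫ (Y.XIsoOfEq (show n - 1 = -1 + n by omega)).hom), ?_⟩
    change (n.negOnePow • (h ≫ (Y.XIsoOfEq (show n - 1 = -1 + n by omega)).hom)) ≫ (n.negOnePow • Y.d (-1 + n) (0 + n)) = f
    rw [← cancel_mono (Y.XIsoOfEq (show (0 : ℤ) + n = n by omega)).hom, ← hh]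
    simp only [CochainComplex.shiftFunctor_obj_d', Preadditive.zsmul_comp,
      Linear.units_smul_comp, Linear.comp_units_smul, Category.assoc,
      HomologicalComplex.XIsoOfEq_hom_comp_d, HomologicalComplex.d_comp_XIsoOfEq_hom,
      smul_smul, Int.units_mul_self, one_smul]

lemma homK_zero_iff_pred (C : 𝒜) (Y : CochainComplex 𝒜 ℤ) :
    (∀ f : (HomotopyCategory.quotient 𝒜 (ComplexShape.up ℤ)).obj
        ((HomologicalComplex.single 𝒜 (ComplexShape.up ℤ) 0).obj C) ⟶
        (HomotopyCategory.quotient 𝒜 (ComplexShape.up ℤ)).obj Y, f = 0) ↔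
      Pred C Y (-1) 0 1 := by
  set s := HomologicalComplex.singleObjXSelf (ComplexShape.up ℤ) 0 C with hs
  constructor
  · intro H g hg
    let φ : (HomologicalComplex.single 𝒜 (ComplexShape.up ℤ) 0).obj C ⟶ Y :=
      HomologicalComplex.mkHomFromSingle g (fun i hi => by
        obtain rfl : i = 1 := by simpa using hi.symm
        exact hg)
    have hφ : (HomotopyCategory.quotient 𝒜 (ComplexShape.up ℤ)).map φ = 0 := H _
    have ht : Homotopy φ 0 := HomotopyCategory.homotopyOfEq _ _ (by
      rw [hφ, Functor.map_zero])
    refine ⟨s.inv ≫ ht.hom 0 (-1), ?_⟩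
    have hc := ht.comm 0
    rw [dNext_eq ht.hom (show (ComplexShape.up ℤ).Rel 0 1 by simp),
      prevD_eq ht.hom (show (ComplexShape.up ℤ).Rel (-1) 0 by simp)] at hc
    simp only [HomologicalComplex.single_obj_d, zero_comp, zero_add,
      HomologicalComplex.zero_f, add_zero] at hc
    rw [Category.assoc, ← hc]
    have := HomologicalComplex.mkHomFromSingle_f g (fun i hi => by
        obtain rfl : i = 1 := by simpa using hi.symm
        exact hg)
    rw [show φ.f 0 = s.hom ≫ g from this]
    simp
  · intro H f
    obtain ⟨φ, rfl⟩ := (HomotopyCategory.quotient 𝒜 (ComplexShape.up ℤ)).map_surjective f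
    have hg : (s.inv ≫ φ.f 0) ≫ Y.d 0 1 = 0 := by
      rw [Category.assoc, φ.comm 0 1]
      simp
    obtain ⟨h, hh⟩ := H _ hg
    have ht : Homotopy φ 0 :=
      { hom := fun i j =>
          if hij : i = 0 ∧ j = -1 then
            eqToHom (by rw [hij.1]) ≫ s.hom ≫ h ≫ eqToHom (by rw [hij.2])
          else 0
        zero := fun i j hij => by
          rw [dif_neg]
          rintro ⟨rfl, rfl⟩
          exact hij (by simp)
        comm := fun i => by
          by_cases hi : i = 0
          · subst hi
            rw [dNext_eq _ (show (ComplexShape.up ℤ).Rel 0 1 by simp),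
              prevD_eq _ (show (ComplexShape.up ℤ).Rel (-1) 0 by simp),
              dif_neg (show ¬((1:ℤ) = 0 ∧ (0:ℤ) = -1) by simp),
              dif_pos ⟨rfl, rfl⟩]
            simp [hh]
          · exact (HomologicalComplex.isZero_single_obj_X
              (ComplexShape.up ℤ) 0 C i hi).eq_of_src _ _ }
    rw [HomotopyCategory.eq_of_homotopy _ _ ht, Functor.map_zero]

abbrev QK : CochainComplex 𝒜 ℤ ⥤ HomotopyCategory 𝒜 (ComplexShape.up ℤ) :=
  HomotopyCategory.quotient 𝒜 (ComplexShape.up ℤ)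

lemma cacyclic_iff_orth (𝒞 : 𝒜 → Prop) (X : HomotopyCategory 𝒜 (ComplexShape.up ℤ)) :
    CAcyclic 𝒞 X.as ↔
      ∀ (C : 𝒜), 𝒞 C → ∀ (n : ℤ)
        (f : (HomotopyCategory.singleFunctor 𝒜 0).obj C ⟶ X⟦n⟧), f = 0 := by
  constructor
  · intro hX C hC n f
    have hp : Pred C X.as (n-1) n (n+1) :=
      (exactAt_iff_pred C X.as (n-1) n (n+1) (by omega) rfl).1 (hX C hC n)
    have hz := (homK_zero_iff_pred C (X.as⟦n⟧)).2 ((pred_shift_iff C X.as n).2 hp)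
    have h0 : f ≫ (((QK (𝒜 := 𝒜)).commShiftIso n).inv.app X.as) = 0 := hz _
    calc f = ((f ≫ (((QK (𝒜 := 𝒜)).commShiftIso n).inv.app X.as)) ≫
        (((QK (𝒜 := 𝒜)).commShiftIso n).hom.app X.as) : _ ⟶ X⟦n⟧) := by
          erw [Category.assoc, Iso.inv_hom_id_app]
          exact (Category.comp_id f).symm
    _ = 0 := by rw [h0]; exact Limits.zero_comp
  · intro H C hC n
    rw [exactAt_iff_pred C X.as (n-1) n (n+1) (by omega) rfl, ← pred_shift_iff,
      ← homK_zero_iff_pred]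
    intro g
    have h0 : g ≫ (((QK (𝒜 := 𝒜)).commShiftIso n).hom.app X.as) = 0 := H C hC n _
    calc g = (g ≫ (((QK (𝒜 := 𝒜)).commShiftIso n).hom.app X.as)) ≫
        (((QK (𝒜 := 𝒜)).commShiftIso n).inv.app X.as) := by
          simp only [Category.assoc, Iso.hom_inv_id_app]
          exact (Category.comp_id g).symm
    _ = 0 := by rw [h0, Limits.zero_comp]

lemma orth_comp_zero {𝒞 : 𝒜 → Prop} {X : HomotopyCategory 𝒜 (ComplexShape.up ℤ)}
    (hX : ∀ (C : 𝒜), 𝒞 C → ∀ (n : ℤ)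
      (f : (HomotopyCategory.singleFunctor 𝒜 0).obj C ⟶ X⟦n⟧), f = 0)
    {C : 𝒜} (hC : 𝒞 C) {Y : HomotopyCategory 𝒜 (ComplexShape.up ℤ)} (n : ℤ)
    (e : Y ≅ X⟦n⟧) (f : (HomotopyCategory.singleFunctor 𝒜 0).obj C ⟶ Y) : f = 0 := by
  have h0 := hX C hC n (f ≫ e.hom)
  calc f = (f ≫ e.hom) ≫ e.inv := by simp
  _ = 0 := by rw [h0, Limits.zero_comp]

/-- Let `𝒞` be a full additive subcategory of an abelian category `𝒜`.
In the homotopy category `K(𝒜)`, the full subcategory of `𝒞`-acyclic complexes coincides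
with the left orthogonal `^⊥𝒞 = {X• : Hom_{K(𝒜)}(C, X•[n]) = 0 for all n ∈ ℤ, C ∈ 𝒞}`
(where `C` is regarded as a stalk complex in degree `0`); in particular it is a thick
triangulated subcategory: it is closed under isomorphisms, shifts, extensions
(distinguished triangles) and direct summands. -/
theorem stmt_12 (𝒞 : 𝒜 → Prop) :
    -- the equality `K_{𝒞ac}(𝒜) = ^⊥𝒞` :
    (∀ X : HomotopyCategory 𝒜 (ComplexShape.up ℤ),
      CAcyclic 𝒞 X.as ↔
        ∀ (C : 𝒜), 𝒞 C → ∀ (n : ℤ)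
          (f : (HomotopyCategory.singleFunctor 𝒜 0).obj C ⟶ X⟦n⟧), f = 0) ∧
    -- thickness: closedness under isomorphisms, shifts, triangles and direct summands
    (∀ X Y : HomotopyCategory 𝒜 (ComplexShape.up ℤ),
      (X ≅ Y) → CAcyclic 𝒞 X.as → CAcyclic 𝒞 Y.as) ∧
    (∀ (X : HomotopyCategory 𝒜 (ComplexShape.up ℤ)) (n : ℤ),
      CAcyclic 𝒞 X.as → CAcyclic 𝒞 (X⟦n⟧).as) ∧
    (∀ T : Triangle (HomotopyCategory 𝒜 (ComplexShape.up ℤ)),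
      (T ∈ distTriang (HomotopyCategory 𝒜 (ComplexShape.up ℤ))) →
      CAcyclic 𝒞 T.obj₁.as → CAcyclic 𝒞 T.obj₂.as → CAcyclic 𝒞 T.obj₃.as) ∧
    (∀ X Y : CochainComplex 𝒜 ℤ, CAcyclic 𝒞 (X ⊞ Y) → CAcyclic 𝒞 X) := by
  refine ⟨cacyclic_iff_orth 𝒞, ?_, ?_, ?_, ?_⟩
  · -- isomorphism closure
    intro X Y e hX
    rw [cacyclic_iff_orth] at hX ⊢
    intro C hC n f
    have h0 := hX C hC n (f ≫ (e.inv)⟦n⟧')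
    calc f = (f ≫ (e.inv)⟦n⟧') ≫ (e.hom)⟦n⟧' := by
          rw [Category.assoc, ← Functor.map_comp, e.inv_hom_id,
            CategoryTheory.Functor.map_id]
          exact (Category.comp_id f).symm
    _ = 0 := by rw [h0, Limits.zero_comp]
  · -- shift closure
    intro X n hX
    rw [cacyclic_iff_orth] at hX ⊢
    intro C hC m f
    exact orth_comp_zero hX hC (n + m)
      ((shiftFunctorAdd' (HomotopyCategory 𝒜 (ComplexShape.up ℤ)) n m (n + m) rfl).symm.app X) f
  · -- triangles
    intro T hT h1 h2
    rw [cacyclic_iff_orth] at h1 h2 ⊢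
    intro C hC n f
    have hT' := Pretriangulated.Triangle.shift_distinguished T hT n
    have hf3 : f ≫ ((Triangle.shiftFunctor _ n).obj T).mor₃ = 0 :=
      orth_comp_zero h1 hC (n + 1)
        ((shiftFunctorAdd' (HomotopyCategory 𝒜 (ComplexShape.up ℤ)) n 1 (n + 1) rfl).symm.app
          T.obj₁) _
    obtain ⟨g, hg⟩ := Pretriangulated.Triangle.coyoneda_exact₃ _ hT' f hf3
    rw [hg, h2 C hC n g]
    exact Limits.zero_comp
  · -- direct summands
    intro X Y hXY
    have horth := (cacyclic_iff_orth 𝒞 ((QK (𝒜 := 𝒜)).obj (X ⊞ Y))).1 hXY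
    refine (cacyclic_iff_orth 𝒞 ((QK (𝒜 := 𝒜)).obj X)).2 ?_
    intro C hC n f
    have h0 := horth C hC n (f ≫ ((QK (𝒜 := 𝒜)).map (biprod.inl : X ⟶ X ⊞ Y))⟦n⟧')
    calc f = (f ≫ ((QK (𝒜 := 𝒜)).map (biprod.inl : X ⟶ X ⊞ Y))⟦n⟧') ≫
          ((QK (𝒜 := 𝒜)).map (biprod.fst : X ⊞ Y ⟶ X))⟦n⟧' := by
          rw [Category.assoc, ← Functor.map_comp, ← Functor.map_comp, biprod.inl_fst,
            CategoryTheory.Functor.map_id, CategoryTheory.Functor.map_id]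
          exact (Category.comp_id f).symm
    _ = 0 := by rw [h0, Limits.zero_comp]
end

section
/- Let 𝒞 be a full additive subcategory of an abelian category 𝒜, let C• be an upper-bounded complex with terms in 𝒞, and let f•: X• → C• be a 𝒞-quasi-isomorphism (i.e., Hom_𝒜(C, f•) is a quasi-isomorphism for every C ∈ 𝒞). Then there is a chain map g•: C• → X• such that f• ∘ g• is homotopic to the identity on C•. Consequently, if X• also has all terms in 𝒞, then f• is a homotopy equivalence. -/
open CategoryTheory CategoryTheory.Limits

universe v u

private lemma stmt13_eqToHom_comp_d {A : Type u} [Category.{v} A] [Abelian A]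
    (K : CochainComplex A ℤ) {p q : ℤ} (h : p = q) (r : ℤ) :
    eqToHom (congrArg K.X h) ≫ K.d q r = K.d p r := by subst h; simp

section Aux

variable {A : Type u} [Category.{v} A] [Abelian A]

private lemma stmt13_coneExactAt {K L : CochainComplex A ℤ}
    (φ : K ⟶ L) [QuasiIso φ] (n : ℤ) : (CochainComplex.mappingCone φ).ExactAt n := by
  have h1 : HomotopyCategory.quasiIso A (ComplexShape.up ℤ)
      ((HomotopyCategory.quotient _ _).map φ) := by
    rw [HomotopyCategory.quotient_map_mem_quasiIso_iff]
    rwa [HomologicalComplex.mem_quasiIso_iff]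
  rw [HomotopyCategory.quasiIso_eq_subcategoryAcyclic_W] at h1
  have hd : CochainComplex.mappingCone.triangleh φ ∈
      distTriang (HomotopyCategory A (ComplexShape.up ℤ)) := ⟨K, L, φ, ⟨Iso.refl _⟩⟩
  have h2 := ((HomotopyCategory.subcategoryAcyclic A).trW_iff_of_distinguished _ hd).1 h1
  exact (HomotopyCategory.quotient_obj_mem_subcategoryAcyclic_iff_exactAt
    (CochainComplex.mappingCone φ)).1 h2 n

private noncomputable def stmt13_solveData (C K : CochainComplex A ℤ) (b : ℤ)
    (hC : ∀ n : ℤ, b < n → IsZero (C.X n))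
    (hK : ∀ (n : ℤ) (ψ : C.X n ⟶ K.X n), ψ ≫ K.d n (n+1) = 0 →
      ∃ h : C.X n ⟶ K.X (n-1), h ≫ K.d (n-1) n = ψ)
    (φ : C ⟶ K) :
    ∀ n : ℤ, Σ' (p : (C.X (n+1) ⟶ K.X n) × (C.X n ⟶ K.X (n-1))),
      p.2 ≫ K.d (n-1) n = φ.f n - C.d n (n+1) ≫ p.1 := fun n =>
  if hn : b < n then ⟨(0, 0), by
    have h0 : φ.f n = 0 := (hC n hn).eq_of_src _ _
    simp [h0]⟩
  else
    let prev := stmt13_solveData C K b hC hK φ (n+1)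
    let y : C.X (n+1) ⟶ K.X n := prev.1.2 ≫ eqToHom (congrArg K.X (by omega : n+1-1 = n))
    have hy : y ≫ K.d n (n+1) = φ.f (n+1) - C.d (n+1) (n+1+1) ≫ prev.1.1 := by
      rw [← prev.2]
      simp only [y, Category.assoc]
      congr 1
      exact stmt13_eqToHom_comp_d K (by omega) (n+1)
    have hψ : (φ.f n - C.d n (n+1) ≫ y) ≫ K.d n (n+1) = 0 := by
      rw [Preadditive.sub_comp, Category.assoc, hy, Preadditive.comp_sub, φ.comm n (n+1)]
      simp
    ⟨(y, Classical.choose (hK n _ hψ)), Classical.choose_spec (hK n _ hψ)⟩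
termination_by n => (b + 1 - n).toNat
decreasing_by omega

private lemma stmt13_solveData_fst (C K : CochainComplex A ℤ) (b : ℤ)
    (hC : ∀ n : ℤ, b < n → IsZero (C.X n))
    (hK : ∀ (n : ℤ) (ψ : C.X n ⟶ K.X n), ψ ≫ K.d n (n+1) = 0 →
      ∃ h : C.X n ⟶ K.X (n-1), h ≫ K.d (n-1) n = ψ)
    (φ : C ⟶ K) (n : ℤ) (hn : ¬ b < n) :
    (stmt13_solveData C K b hC hK φ n).1.1 =
      (stmt13_solveData C K b hC hK φ (n+1)).1.2 ≫
        eqToHom (congrArg K.X (by omega : n+1-1 = n)) := by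
  rw [stmt13_solveData]
  simp [hn]

private noncomputable def stmt13_nullHomotopy (C K : CochainComplex A ℤ) (b : ℤ)
    (hC : ∀ n : ℤ, b < n → IsZero (C.X n))
    (hK : ∀ (n : ℤ) (ψ : C.X n ⟶ K.X n), ψ ≫ K.d n (n+1) = 0 →
      ∃ h : C.X n ⟶ K.X (n-1), h ≫ K.d (n-1) n = ψ)
    (φ : C ⟶ K) : Homotopy φ 0 where
  hom i j := if h : i - 1 = j then
    (stmt13_solveData C K b hC hK φ i).1.2 ≫ eqToHom (congrArg K.X h) else 0
  zero i j h := dif_neg (by simp only [ComplexShape.up_Rel] at h; omega)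
  comm i := by
    rw [dNext_eq _ (show (ComplexShape.up ℤ).Rel i (i+1) by simp),
      prevD_eq _ (show (ComplexShape.up ℤ).Rel (i-1) i by simp)]
    rw [dif_pos (show i + 1 - 1 = i by omega), dif_pos rfl]
    simp only [eqToHom_refl, Category.comp_id, HomologicalComplex.zero_f, add_zero]
    by_cases hi : b < i
    · exact (hC i hi).eq_of_src _ _
    · have h1 := (stmt13_solveData C K b hC hK φ i).2
      rw [stmt13_solveData_fst C K b hC hK φ i hi] at h1
      rw [h1]
      abel

private lemma stmt13_acyclic_elementwise (K : CochainComplex A ℤ) (Z : A)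
    (hex : ∀ n : ℤ, (((preadditiveCoyoneda.obj (Opposite.op Z)).mapHomologicalComplex
      (ComplexShape.up ℤ)).obj K).ExactAt n)
    (n : ℤ) (ψ : Z ⟶ K.X n) (hψ : ψ ≫ K.d n (n+1) = 0) :
    ∃ h : Z ⟶ K.X (n-1), h ≫ K.d (n-1) n = ψ := by
  have h := (HomologicalComplex.exactAt_iff' _ (n-1) n (n+1)
    (by simp) (by simp)).1 (hex n)
  rw [ShortComplex.ab_exact_iff] at h
  obtain ⟨x₁, hx₁⟩ := h ψ hψ
  exact ⟨x₁, hx₁⟩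

private lemma stmt13_key (𝒞 : A → Prop)
    (X C : CochainComplex A ℤ)
    (hCbdd : ∃ b : ℤ, ∀ n : ℤ, b < n → IsZero (C.X n))
    (hCC : ∀ n : ℤ, 𝒞 (C.X n))
    (f : X ⟶ C)
    (hf : ∀ (Z : A), 𝒞 Z → QuasiIso
      (((preadditiveCoyoneda.obj (Opposite.op Z)).mapHomologicalComplex
        (ComplexShape.up ℤ)).map f)) :
    ∃ g : C ⟶ X, Nonempty (Homotopy (g ≫ f) (𝟙 C)) := by
  obtain ⟨b, hb⟩ := hCbdd
  set K := CochainComplex.mappingCone f with hKdef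
  have hex : ∀ (Z : A), 𝒞 Z → ∀ n : ℤ,
      (((preadditiveCoyoneda.obj (Opposite.op Z)).mapHomologicalComplex
        (ComplexShape.up ℤ)).obj K).ExactAt n := by
    intro Z hZ n
    haveI := hf Z hZ
    exact ((stmt13_coneExactAt _ n).of_iso
      (CochainComplex.mappingCone.mapHomologicalComplexIso f _).symm)
  have hK : ∀ (n : ℤ) (ψ : C.X n ⟶ K.X n), ψ ≫ K.d n (n+1) = 0 →
      ∃ h : C.X n ⟶ K.X (n-1), h ≫ K.d (n-1) n = ψ :=
    fun n ψ h0 => stmt13_acyclic_elementwise K (C.X n) (hex _ (hCC n)) n ψ h0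
  have H : Homotopy (CochainComplex.mappingCone.inr f) 0 :=
    stmt13_nullHomotopy C K b hb hK (CochainComplex.mappingCone.inr f)
  have hq : (HomotopyCategory.quotient A (ComplexShape.up ℤ)).map
      (CochainComplex.mappingCone.inr f) = 0 := by
    rw [HomotopyCategory.eq_of_homotopy _ _ H, Functor.map_zero]
  have hd : CochainComplex.mappingCone.triangleh f ∈
      distTriang (HomotopyCategory A (ComplexShape.up ℤ)) := ⟨X, C, f, ⟨Iso.refl _⟩⟩
  obtain ⟨γ, hγ⟩ := Pretriangulated.Triangle.coyoneda_exact₂ _ hd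
    (𝟙 ((HomotopyCategory.quotient A (ComplexShape.up ℤ)).obj C)) (by
      refine (Category.id_comp _).trans ?_
      exact hq)
  obtain ⟨g, rfl⟩ := (HomotopyCategory.quotient A (ComplexShape.up ℤ)).map_surjective γ
  refine ⟨g, ⟨HomotopyCategory.homotopyOfEq _ _ ?_⟩⟩
  refine ((Functor.map_comp _ _ _).trans ?_).trans (CategoryTheory.Functor.map_id _ _).symm
  exact hγ.symm

end Aux

/-- Let `𝒞` be a full additive subcategory of an abelian category `𝒜`, let
`C•` be an upper-bounded cochain complex with all terms in `𝒞`, and let `f : X• ⟶ C•` be a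
`𝒞`-quasi-isomorphism, i.e. `Hom_𝒜(C, f)` is a quasi-isomorphism for every `C ∈ 𝒞`.  Then
there is a chain map `g : C• ⟶ X•` with `f ∘ g` homotopic to the identity of `C•`.
Consequently, if `X•` is also an upper-bounded complex with all terms in `𝒞`, then `f` is a
homotopy equivalence. -/
theorem stmt_13 {𝒜 : Type u} [Category.{v} 𝒜] [Abelian 𝒜]
    (𝒞 : 𝒜 → Prop)
    (X C : CochainComplex 𝒜 ℤ)
    (hCbdd : ∃ b : ℤ, ∀ n : ℤ, b < n → IsZero (C.X n))
    (hCC : ∀ n : ℤ, 𝒞 (C.X n))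
    (f : X ⟶ C)
    (hf : ∀ (Z : 𝒜), 𝒞 Z → QuasiIso
      (((preadditiveCoyoneda.obj (Opposite.op Z)).mapHomologicalComplex
        (ComplexShape.up ℤ)).map f)) :
    (∃ g : C ⟶ X, Nonempty (Homotopy (g ≫ f) (𝟙 C))) ∧
    ((∃ b : ℤ, ∀ n : ℤ, b < n → IsZero (X.X n)) → (∀ n : ℤ, 𝒞 (X.X n)) →
      ∃ g : C ⟶ X, Nonempty (Homotopy (f ≫ g) (𝟙 X)) ∧ Nonempty (Homotopy (g ≫ f) (𝟙 C))) := by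
  obtain ⟨g, ⟨hg⟩⟩ := stmt13_key 𝒞 X C hCbdd hCC f hf
  refine ⟨⟨g, ⟨hg⟩⟩, fun hXbdd hXC => ?_⟩
  -- g is also a 𝒞-quasi-isomorphism
  have hg' : ∀ (Z : 𝒜), 𝒞 Z → QuasiIso
      (((preadditiveCoyoneda.obj (Opposite.op Z)).mapHomologicalComplex
        (ComplexShape.up ℤ)).map g) := by
    intro Z hZ
    haveI := hf Z hZ
    set F := (preadditiveCoyoneda.obj (Opposite.op Z)).mapHomologicalComplex
      (ComplexShape.up ℤ) with hF
    have hcomp : Homotopy (F.map g ≫ F.map f) (𝟙 (F.obj C)) := by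
      rw [← Functor.map_comp, ← CategoryTheory.Functor.map_id]
      exact (preadditiveCoyoneda.obj (Opposite.op Z)).mapHomotopy hg
    haveI : QuasiIso (F.map g ≫ F.map f) := by
      rw [quasiIso_iff]
      intro n
      rw [quasiIsoAt_iff_isIso_homologyMap]
      have he : HomologicalComplex.homologyMap (F.map g ≫ F.map f) n = 𝟙 _ := by
        rw [hcomp.homologyMap_eq, HomologicalComplex.homologyMap_id]
      rw [he]
      infer_instance
    exact quasiIso_of_comp_right (F.map g) (F.map f)
  obtain ⟨g', ⟨hgg'⟩⟩ := stmt13_key 𝒞 C X hXbdd hXC g hg'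
  -- in the homotopy category: [g][f]=1 and [g'][g]=1 imply [f][g]=1
  refine ⟨g, ⟨HomotopyCategory.homotopyOfEq _ _ ?_⟩, ⟨hg⟩⟩
  set Q := HomotopyCategory.quotient 𝒜 (ComplexShape.up ℤ) with hQ
  have e1 : Q.map g ≫ Q.map f = 𝟙 _ := by
    rw [← Functor.map_comp, HomotopyCategory.eq_of_homotopy _ _ hg, CategoryTheory.Functor.map_id]
  have e2 : Q.map g' ≫ Q.map g = 𝟙 _ := by
    rw [← Functor.map_comp, HomotopyCategory.eq_of_homotopy _ _ hgg', CategoryTheory.Functor.map_id]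
  have e3 : Q.map f ≫ Q.map g = 𝟙 _ := by
    have : Q.map g' = Q.map f := by
      calc Q.map g' = Q.map g' ≫ (Q.map g ≫ Q.map f) := by rw [e1, Category.comp_id]
      _ = (Q.map g' ≫ Q.map g) ≫ Q.map f := by rw [Category.assoc]
      _ = Q.map f := by rw [e2, Category.id_comp]
    rw [← this, e2]
  rw [Functor.map_comp, CategoryTheory.Functor.map_id]
  exact e3
end
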